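/- Let π = (p_1,...,p_n) be a sequence of distinct keys avoiding the pattern (2,3,1) (i.e., there are no indices i < j < k with p_k < p_i < p_j). Let T_0 = BST(π) with all nodes initially untouched, and for 1 ≤ i ≤ n form T_i from T_{i−1} by marking the node with key p_i as touched and then splaying it. Then for every i with 1 ≤ i ≤ n, every sub-root of T_i (untouched node whose parent in T_i is touched) has left-depth at most 1 in T_i. -/

import Mathlib

/-- Binary trees with keys at internal nodes. -/
inductive BT (α : Type) where
  | leaf : BT α
  | node : BT α → α → BT α → BT α
deriving DecidableEq

namespace BT

variable {α : Type} [LinearOrder α]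

/-- The list of keys of a tree, in symmetric (inorder) order. -/
def keys : BT α → List α
  | leaf => []
  | node l v r => keys l ++ v :: keys r

/-- The number of nodes of a tree. -/
def size : BT α → ℕ
  | leaf => 0
  | node l _ r => size l + size r + 1

/-- The symmetric-order (binary search tree) property. -/
def IsBST : BT α → Prop
  | leaf => True
  | node l v r => (∀ x ∈ l.keys, x < v) ∧ (∀ x ∈ r.keys, v < x) ∧ l.IsBST ∧ r.IsBST

/-- Preorder of a binary tree: root, then left subtree, then right subtree. -/
def preorder : BT α → List α
  | leaf => []
  | node l v r => v :: (preorder l ++ preorder r)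

/-- Postorder of a binary tree: left subtree, right subtree, then root. -/
def postorder : BT α → List α
  | leaf => []
  | node l v r => postorder l ++ postorder r ++ [v]

/-- Reversed preorder: root, then right subtree, then left subtree
(the preorder of the mirror image). -/
def revPreorder : BT α → List α
  | leaf => []
  | node l v r => v :: (revPreorder r ++ revPreorder l)

/-- Standard leaf insertion into a binary search tree. -/
def insertKey : BT α → α → BT α
  | leaf, x => node leaf x leaf
  | node l v r, x =>
    if x < v then node (insertKey l x) v r
    else if v < x then node l v (insertKey r x)
    else node l v r

/-- The depth (number of edges from the root) of the node with key `x`,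
located by binary search. -/
def depthOf : BT α → α → ℕ
  | leaf, _ => 0
  | node l v r, x =>
    if x < v then depthOf l x + 1
    else if v < x then depthOf r x + 1
    else 0

/-- The search path to the key `x`: `false` records a step to a left child,
`true` a step to a right child. -/
def pathTo : BT α → α → List Bool
  | leaf, _ => []
  | node l v r, x =>
    if x < v then false :: pathTo l x
    else if v < x then true :: pathTo r x
    else []

/-- The left-depth of the node with key `x`: the number of left-child edges
on the path from the root to it. -/
def leftDepthKey : BT α → α → ℕ
  | leaf, _ => 0
  | node l v r, x =>
    if x < v then leftDepthKey l x + 1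
    else if v < x then leftDepthKey r x
    else 0

/-- The subtree rooted at the node with key `x` (empty if `x` is absent). -/
def subtreeAt : BT α → α → BT α
  | leaf, _ => leaf
  | node l v r, x =>
    if x < v then subtreeAt l x
    else if v < x then subtreeAt r x
    else node l v r

/-- The key at the root, if any. -/
def rootKey : BT α → Option α
  | leaf => none
  | node _ v _ => some v

/-- The key of the parent of the node with key `x`, if any. -/
def parentKey : BT α → α → Option α
  | leaf, _ => none
  | node l v r, x =>
    if x < v then (if l.rootKey = some x then some v else l.parentKey x)
    else if v < x then (if r.rootKey = some x then some v else r.parentKey x)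
    else none

/-- A step of the context (zipper) describing the search path from the root
to the current subtree: `inL v r` means the current subtree is the left child
of a node with key `v` and right subtree `r`; `inR l v` means it is the right
child of a node with key `v` and left subtree `l`. -/
inductive Ctx (α : Type) where
  | inL : α → BT α → Ctx α
  | inR : BT α → α → Ctx α

/-- Descend along the search path for `x`, recording the context.
The head of the returned list corresponds to the immediate parent. -/
def descend : BT α → α → List (Ctx α) → List (Ctx α) × BT α
  | leaf, _, acc => (acc, leaf)
  | node l v r, x, acc =>
    if x < v then descend l x (Ctx.inL v r :: acc)
    else if v < x then descend r x (Ctx.inR l v :: acc)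
    else (acc, node l v r)

/-- Reattach a subtree into its context, with no rotations. -/
def rebuild : BT α → List (Ctx α) → BT α
  | t, [] => t
  | t, Ctx.inL v r :: cs => rebuild (node t v r) cs
  | t, Ctx.inR l v :: cs => rebuild (node l v t) cs

/-- Bottom-up splay steps: repeatedly apply zig / zig-zig / zig-zag steps to
the current subtree (rooted at the node being splayed) until the context is
exhausted. -/
def splayLoop : BT α → List (Ctx α) → BT α
  | t, [] => t
  | node a x b, [Ctx.inL v r] => node a x (node b v r)          -- zig
  | node a x b, [Ctx.inR l v] => node (node l v a) x b          -- zig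
  | node a x b, Ctx.inL p pr :: Ctx.inL g gr :: cs =>           -- zig-zig
      splayLoop (node a x (node b p (node pr g gr))) cs
  | node a x b, Ctx.inL p pr :: Ctx.inR gl g :: cs =>           -- zig-zag
      splayLoop (node (node gl g a) x (node b p pr)) cs
  | node a x b, Ctx.inR pl p :: Ctx.inR gl g :: cs =>           -- zig-zig
      splayLoop (node (node (node gl g pl) p a) x b) cs
  | node a x b, Ctx.inR pl p :: Ctx.inL g gr :: cs =>           -- zig-zag
      splayLoop (node (node pl p a) x (node b g gr)) cs
  | leaf, cs => rebuild leaf cs   -- unreachable when the splayed key is present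

/-- Splaying the key `x`: if `x` occurs in the tree, bring its node to the
root by bottom-up splay steps; otherwise leave the tree unchanged. -/
def splay (x : α) (t : BT α) : BT α :=
  match descend t x [] with
  | (_, leaf) => t
  | (cs, found) => splayLoop found cs

/-- `α`-weight-balance in the sense of Nievergelt–Reingold:
at each node, `min(|L|,|R|) + 1 ≥ α * (|x| + 1)`. -/
def WeightBalanced (a : ℝ) : BT α → Prop
  | leaf => True
  | node l _ r =>
      (min l.size r.size + 1 : ℝ) ≥ a * ((l.size + r.size + 1 : ℕ) + 1 : ℝ) ∧
      WeightBalanced a l ∧ WeightBalanced a r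

/-- The rank of `x` in `t`: the number of keys of `t` that are `≤ x`. -/
def rank (t : BT α) (x : α) : ℕ := (t.keys.filter (fun y => y ≤ x)).length

end BT

section Defs

variable {α : Type} [LinearOrder α]

/-- The insertion tree of a sequence: leaf-insert the keys in order. -/
def bstOf (π : List α) : BT α := π.foldl BT.insertKey BT.leaf

/-- `q` is a sub-root: a node of `t` not yet touched whose parent is touched,
where `touched` is the list of touched keys. -/
def IsSubRoot (t : BT α) (touched : List α) (q : α) : Prop :=
  q ∈ t.keys ∧ q ∉ touched ∧ ∃ p, t.parentKey q = some p ∧ p ∈ touched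

/-- π avoids the pattern (2,3,1). -/
def Avoids231 (π : List α) : Prop :=
  ¬ ∃ i j k : Fin π.length, i < j ∧ j < k ∧ π.get k < π.get i ∧ π.get i < π.get j

/-- π avoids the pattern (3,1,2). -/
def Avoids312 (π : List α) : Prop :=
  ¬ ∃ i j k : Fin π.length, i < j ∧ j < k ∧ π.get j < π.get k ∧ π.get k < π.get i

/-- π avoids the pattern (2,1,3). -/
def Avoids213 (π : List α) : Prop :=
  ¬ ∃ i j k : Fin π.length, i < j ∧ j < k ∧ π.get j < π.get i ∧ π.get i < π.get k

/-- π contains a strictly decreasing subsequence of length `k`. -/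
def HasDecreasingSubseq (π : List α) (k : ℕ) : Prop :=
  ∃ s : List α, s.Sublist π ∧ s.length = k ∧ s.Chain' (· > ·)

/-- Splay the keys of a list in order, starting from `t`. -/
def splaySeq (π : List α) (t : BT α) : BT α := π.foldl (fun s x => BT.splay x s) t

/-- The cost of splaying a sequence of keys starting from `t`:
each splay costs the current depth of the requested key plus one. -/
def splayCost : BT α → List α → ℕ
  | _, [] => 0
  | t, x :: xs => (t.depthOf x + 1) + splayCost (BT.splay x t) xs

/-- The cost of insertion splaying a sequence of keys starting from `t`:
each key is leaf-inserted, then the new node is splayed, at a cost of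
its depth after insertion plus one. -/
def insertSplayCost : BT α → List α → ℕ
  | _, [] => 0
  | t, x :: xs =>
    ((t.insertKey x).depthOf x + 1) + insertSplayCost (BT.splay x (t.insertKey x)) xs

/-- `DF rk xs` = Σ_{i≥2} log₂(|rk(x_i) − rk(x_{i−1})| + 1). -/
noncomputable def DF (rk : α → ℕ) (xs : List α) : ℝ :=
  ((xs.zip xs.tail).map
    (fun p => Real.logb 2 (|(rk p.2 : ℝ) - (rk p.1 : ℝ)| + 1))).sum

/-- The rank of `x` within the sequence `σ` itself. -/
def rankIn (σ : List α) (x : α) : ℕ := (σ.filter (fun y => y ≤ x)).length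

/-- The dynamic-finger sum of a sequence, with ranks computed in the
sequence itself. -/
noncomputable def DFseq (σ : List α) : ℝ := DF (rankIn σ) σ

end Defs

set_option linter.unusedSectionVars false
set_option linter.unnecessarySimpa false
set_option linter.unusedVariables false
namespace BTAux
open BT

variable {α : Type} [LinearOrder α]

attribute [local simp] BT.keys BT.subtreeAt BT.leftDepthKey BT.parentKey BT.rootKey

lemma mem_keys_node {l r : BT α} {v q : α} :
    q ∈ (BT.node l v r).keys ↔ q ∈ l.keys ∨ q = v ∨ q ∈ r.keys := by
  simp [BT.keys]

lemma subtreeAt_lt {l r : BT α} {v c : α} (h : c < v) :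
    (BT.node l v r).subtreeAt c = l.subtreeAt c := by simp [h]

lemma subtreeAt_gt {l r : BT α} {v c : α} (h : v < c) :
    (BT.node l v r).subtreeAt c = r.subtreeAt c := by
  simp [h, not_lt_of_gt h]

lemma subtreeAt_self {l r : BT α} {v : α} :
    (BT.node l v r).subtreeAt v = BT.node l v r := by simp

lemma bst_node {l r : BT α} {v : α} :
    (BT.node l v r).IsBST ↔ (∀ x ∈ l.keys, x < v) ∧ (∀ x ∈ r.keys, v < x) ∧ l.IsBST ∧ r.IsBST :=
  Iff.rfl

lemma keys_subtreeAt_subset {t : BT α} {c q : α} (h : q ∈ (t.subtreeAt c).keys) : q ∈ t.keys := by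
  induction t with
  | leaf => simpa using h
  | node l v r ihl ihr =>
    rcases lt_trichotomy c v with hc | hc | hc
    · rw [subtreeAt_lt hc] at h
      exact mem_keys_node.2 (Or.inl (ihl h))
    · subst hc; rwa [subtreeAt_self] at h
    · rw [subtreeAt_gt hc] at h
      exact mem_keys_node.2 (Or.inr (Or.inr (ihr h)))

lemma bst_subtreeAt {t : BT α} (hb : t.IsBST) (c : α) : (t.subtreeAt c).IsBST := by
  induction t with
  | leaf => simpa using hb
  | node l v r ihl ihr =>
    obtain ⟨h1, h2, h3, h4⟩ := bst_node.1 hb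
    rcases lt_trichotomy c v with hc | hc | hc
    · rw [subtreeAt_lt hc]; exact ihl h3
    · subst hc; rw [subtreeAt_self]; exact hb
    · rw [subtreeAt_gt hc]; exact ihr h4

lemma subtreeAt_root_eq {t : BT α} {x v : α} {A B : BT α}
    (h : t.subtreeAt x = BT.node A v B) : v = x := by
  induction t with
  | leaf => simp at h
  | node l w r ihl ihr =>
    rcases lt_trichotomy x w with hc | hc | hc
    · rw [subtreeAt_lt hc] at h; exact ihl h
    · subst hc; rw [subtreeAt_self] at h; exact (BT.node.injEq _ _ _ _ _ _ ▸ h).2.1.symm ▸ rfl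
    · rw [subtreeAt_gt hc] at h; exact ihr h

lemma found_of_mem {t : BT α} (hb : t.IsBST) {x : α} (hx : x ∈ t.keys) :
    ∃ A B, t.subtreeAt x = BT.node A x B := by
  induction t with
  | leaf => simp at hx
  | node l v r ihl ihr =>
    obtain ⟨h1, h2, h3, h4⟩ := bst_node.1 hb
    rcases mem_keys_node.1 hx with h | h | h
    · have hc := h1 _ h
      rw [subtreeAt_lt hc]; exact ihl h3 h
    · subst h; exact ⟨l, r, subtreeAt_self⟩
    · have hc := h2 _ h
      rw [subtreeAt_gt hc]; exact ihr h4 h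

lemma mem_of_found {t : BT α} {x : α} {A B : BT α}
    (h : t.subtreeAt x = BT.node A x B) : x ∈ t.keys := by
  induction t with
  | leaf => simp at h
  | node l v r ihl ihr =>
    rcases lt_trichotomy x v with hc | hc | hc
    · rw [subtreeAt_lt hc] at h; exact mem_keys_node.2 (Or.inl (ihl h))
    · subst hc; exact mem_keys_node.2 (Or.inr (Or.inl rfl))
    · rw [subtreeAt_gt hc] at h; exact mem_keys_node.2 (Or.inr (Or.inr (ihr h)))

set_option linter.unusedSectionVars false
set_option linter.unnecessarySimpa false

lemma rootKey_mem {t : BT α} {x : α} (h : t.rootKey = some x) : x ∈ t.keys := by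
  cases t with
  | leaf => simp at h
  | node l v r => simp at h; subst h; exact mem_keys_node.2 (Or.inr (Or.inl rfl))

lemma not_mem_left {l r : BT α} {v : α} (hb : (BT.node l v r).IsBST) : v ∉ l.keys :=
  fun h => lt_irrefl v (hb.1 _ h)

lemma not_mem_right {l r : BT α} {v : α} (hb : (BT.node l v r).IsBST) : v ∉ r.keys :=
  fun h => lt_irrefl v (hb.2.1 _ h)

/-- keys of subtree at c lie in keys of whichever child when c ≠ root. -/
lemma loc_subtree {t : BT α} (hb : t.IsBST) {c x : α}
    (hx : x ∈ (t.subtreeAt c).keys) (hne : x ≠ c) :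
    t.subtreeAt x = (t.subtreeAt c).subtreeAt x := by
  induction t with
  | leaf => simp at hx
  | node l v r ihl ihr =>
    obtain ⟨h1, h2, h3, h4⟩ := bst_node.1 hb
    rcases lt_trichotomy c v with hc | hc | hc
    · rw [subtreeAt_lt hc] at hx ⊢
      have hxl : x ∈ l.keys := keys_subtreeAt_subset hx
      rw [subtreeAt_lt (h1 _ hxl)]
      exact ihl h3 hx
    · subst hc; rw [subtreeAt_self]
    · rw [subtreeAt_gt hc] at hx ⊢
      have hxr : x ∈ r.keys := keys_subtreeAt_subset hx
      rw [subtreeAt_gt (h2 _ hxr)]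
      exact ihr h4 hx

lemma parentKey_lt {l r : BT α} {v q : α} (h : q < v) :
    (BT.node l v r).parentKey q =
      (if l.rootKey = some q then some v else l.parentKey q) := by simp [h]

lemma parentKey_gt {l r : BT α} {v q : α} (h : v < q) :
    (BT.node l v r).parentKey q =
      (if r.rootKey = some q then some v else r.parentKey q) := by
  simp [h, not_lt_of_gt h]

lemma parentKey_self {l r : BT α} {v : α} : (BT.node l v r).parentKey v = none := by simp

lemma loc_parent {t : BT α} (hb : t.IsBST) {c x : α}
    (hx : x ∈ (t.subtreeAt c).keys) (hne : x ≠ c) :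
    t.parentKey x = (t.subtreeAt c).parentKey x := by
  induction t with
  | leaf => simp at hx
  | node l v r ihl ihr =>
    obtain ⟨h1, h2, h3, h4⟩ := bst_node.1 hb
    rcases lt_trichotomy c v with hc | hc | hc
    · rw [subtreeAt_lt hc] at hx ⊢
      have hxl : x ∈ l.keys := keys_subtreeAt_subset hx
      rw [parentKey_lt (h1 _ hxl)]
      have hroot : l.rootKey ≠ some x := by
        intro hr
        cases l with
        | leaf => simp at hr
        | node a w b =>
          have hr2 : x = w := by simpa using hr.symm
          subst hr2
          rw [subtreeAt_lt] at hx
          · exact not_mem_left h3 (keys_subtreeAt_subset hx)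
          · rcases lt_trichotomy c x with h5 | h5 | h5
            · exact h5
            · exact absurd h5.symm hne
            · rw [subtreeAt_gt h5] at hx
              exact absurd (keys_subtreeAt_subset hx) (not_mem_right h3)
      rw [if_neg hroot]
      exact ihl h3 hx
    · subst hc; rw [subtreeAt_self]
    · rw [subtreeAt_gt hc] at hx ⊢
      have hxr : x ∈ r.keys := keys_subtreeAt_subset hx
      rw [parentKey_gt (h2 _ hxr)]
      have hroot : r.rootKey ≠ some x := by
        intro hr
        cases r with
        | leaf => simp at hr
        | node a w b =>
          have hr2 : x = w := by simpa using hr.symm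
          subst hr2
          rw [subtreeAt_gt] at hx
          · exact not_mem_right h4 (keys_subtreeAt_subset hx)
          · rcases lt_trichotomy c x with h5 | h5 | h5
            · rw [subtreeAt_lt h5] at hx
              exact absurd (keys_subtreeAt_subset hx) (not_mem_left h4)
            · exact absurd h5.symm hne
            · exact h5
      rw [if_neg hroot]
      exact ihr h4 hx

lemma leftDepthKey_lt {l r : BT α} {v q : α} (h : q < v) :
    (BT.node l v r).leftDepthKey q = l.leftDepthKey q + 1 := by simp [h]

lemma leftDepthKey_gt {l r : BT α} {v q : α} (h : v < q) :
    (BT.node l v r).leftDepthKey q = r.leftDepthKey q := by simp [h, not_lt_of_gt h]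

lemma leftDepthKey_self {l r : BT α} {v : α} : (BT.node l v r).leftDepthKey v = 0 := by simp

lemma loc_ld {t : BT α} (hb : t.IsBST) {c x : α}
    (hx : x ∈ (t.subtreeAt c).keys) :
    (t.subtreeAt c).leftDepthKey x ≤ t.leftDepthKey x := by
  induction t with
  | leaf => simp at hx
  | node l v r ihl ihr =>
    obtain ⟨h1, h2, h3, h4⟩ := bst_node.1 hb
    rcases lt_trichotomy c v with hc | hc | hc
    · rw [subtreeAt_lt hc] at hx ⊢
      have hxl : x ∈ l.keys := keys_subtreeAt_subset hx
      rw [leftDepthKey_lt (h1 _ hxl)]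
      exact le_trans (ihl h3 hx) (Nat.le_succ _)
    · subst hc; rw [subtreeAt_self]
    · rw [subtreeAt_gt hc] at hx ⊢
      have hxr : x ∈ r.keys := keys_subtreeAt_subset hx
      rw [leftDepthKey_gt (h2 _ hxr)]
      exact ihr h4 hx

lemma parent_exists {t : BT α} (hb : t.IsBST) {x : α} (hx : x ∈ t.keys)
    (hr : t.rootKey ≠ some x) : ∃ y, t.parentKey x = some y := by
  induction t with
  | leaf => simp at hx
  | node l v r ihl ihr =>
    obtain ⟨h1, h2, h3, h4⟩ := bst_node.1 hb
    have hvx : x ≠ v := by intro h; subst h; simp at hr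
    rcases mem_keys_node.1 hx with h | h | h
    · rw [parentKey_lt (h1 _ h)]
      by_cases hro : l.rootKey = some x
      · exact ⟨v, by rw [if_pos hro]⟩
      · obtain ⟨y, hy⟩ := ihl h3 h hro
        exact ⟨y, by rw [if_neg hro]; exact hy⟩
    · exact absurd h hvx
    · rw [parentKey_gt (h2 _ h)]
      by_cases hro : r.rootKey = some x
      · exact ⟨v, by rw [if_pos hro]⟩
      · obtain ⟨y, hy⟩ := ihr h4 h hro
        exact ⟨y, by rw [if_neg hro]; exact hy⟩

lemma pk_mem_ne {t : BT α} {x y : α} (h : t.parentKey x = some y) :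
    y ∈ t.keys ∧ x ∈ t.keys ∧ y ≠ x := by
  induction t with
  | leaf => simp at h
  | node l v r ihl ihr =>
    rcases lt_trichotomy x v with hc | hc | hc
    · rw [parentKey_lt hc] at h
      by_cases hro : l.rootKey = some x
      · rw [if_pos hro] at h
        have := rootKey_mem hro
        refine ⟨mem_keys_node.2 (Or.inr (Or.inl (by simpa using h.symm))),
          mem_keys_node.2 (Or.inl this), ?_⟩
        have : y = v := by simpa using h.symm
        subst this; exact fun he => absurd hc (by rw [he]; exact lt_irrefl _)
      · rw [if_neg hro] at h
        obtain ⟨hy, hx, hne⟩ := ihl h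
        exact ⟨mem_keys_node.2 (Or.inl hy), mem_keys_node.2 (Or.inl hx), hne⟩
    · subst hc; rw [parentKey_self] at h; simp at h
    · rw [parentKey_gt hc] at h
      by_cases hro : r.rootKey = some x
      · rw [if_pos hro] at h
        have := rootKey_mem hro
        refine ⟨mem_keys_node.2 (Or.inr (Or.inl (by simpa using h.symm))),
          mem_keys_node.2 (Or.inr (Or.inr this)), ?_⟩
        have : y = v := by simpa using h.symm
        subst this; exact fun he => absurd hc (by rw [← he]; exact lt_irrefl _)
      · rw [if_neg hro] at h
        obtain ⟨hy, hx, hne⟩ := ihr h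
        exact ⟨mem_keys_node.2 (Or.inr (Or.inr hy)), mem_keys_node.2 (Or.inr (Or.inr hx)), hne⟩

/-- If y is x's parent, then the subtree at y is a node with x at the root of a child. -/
lemma parent_child {t : BT α} (hb : t.IsBST) {x y : α} (h : t.parentKey x = some y) :
    ∃ l r, t.subtreeAt y = BT.node l y r ∧ (l.rootKey = some x ∨ r.rootKey = some x) := by
  induction t with
  | leaf => simp at h
  | node l v r ihl ihr =>
    obtain ⟨h1, h2, h3, h4⟩ := bst_node.1 hb
    rcases lt_trichotomy x v with hc | hc | hc
    · rw [parentKey_lt hc] at h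
      by_cases hro : l.rootKey = some x
      · rw [if_pos hro] at h
        have hyv : y = v := by simpa using h.symm
        subst hyv
        exact ⟨l, r, subtreeAt_self, Or.inl hro⟩
      · rw [if_neg hro] at h
        obtain ⟨a, b, hs, hor⟩ := ihl h3 h
        have hy : y ∈ l.keys := (pk_mem_ne h).1
        exact ⟨a, b, by rw [subtreeAt_lt (h1 _ hy)]; exact hs, hor⟩
    · subst hc; rw [parentKey_self] at h; simp at h
    · rw [parentKey_gt hc] at h
      by_cases hro : r.rootKey = some x
      · rw [if_pos hro] at h
        have hyv : y = v := by simpa using h.symm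
        subst hyv
        exact ⟨l, r, subtreeAt_self, Or.inr hro⟩
      · rw [if_neg hro] at h
        obtain ⟨a, b, hs, hor⟩ := ihr h4 h
        have hy : y ∈ r.keys := (pk_mem_ne h).1
        exact ⟨a, b, by rw [subtreeAt_gt (h2 _ hy)]; exact hs, hor⟩

/-- Converse: if x is the root of a child of node y, then y is x's parent. -/
lemma parent_child_inv {t : BT α} (hb : t.IsBST) {x y : α} {l r : BT α}
    (hs : t.subtreeAt y = BT.node l y r) (hor : l.rootKey = some x ∨ r.rootKey = some x) :
    t.parentKey x = some y := by
  induction t with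
  | leaf => simp at hs
  | node a v b iha ihb =>
    obtain ⟨h1, h2, h3, h4⟩ := bst_node.1 hb
    have hxS : x ∈ (BT.node l y r).keys := by
      rcases hor with h | h
      · exact mem_keys_node.2 (Or.inl (rootKey_mem h))
      · exact mem_keys_node.2 (Or.inr (Or.inr (rootKey_mem h)))
    have hbS : (BT.node l y r).IsBST := by rw [← hs]; exact bst_subtreeAt hb y
    have hxy : x ≠ y := by
      rintro rfl
      rcases hor with h | h
      · exact not_mem_left hbS (rootKey_mem h)
      · exact not_mem_right hbS (rootKey_mem h)
    rcases lt_trichotomy y v with hc | hc | hc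
    · rw [subtreeAt_lt hc] at hs
      have hxa : x ∈ a.keys := keys_subtreeAt_subset (hs ▸ hxS)
      rw [parentKey_lt (h1 _ hxa)]
      have hro : a.rootKey ≠ some x := by
        intro hr
        cases a with
        | leaf => simp at hr
        | node a1 w b1 =>
          have hr2 : x = w := by simpa using hr.symm
          subst hr2
          rcases lt_trichotomy y x with h5 | h5 | h5
          · rw [subtreeAt_lt h5] at hs
            have : x ∈ (BT.node l y r).keys := hxS
            rw [← hs] at this
            exact not_mem_left h3 (keys_subtreeAt_subset this)
          · exact absurd h5.symm hxy
          · rw [subtreeAt_gt h5] at hs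
            have : x ∈ (BT.node l y r).keys := hxS
            rw [← hs] at this
            exact not_mem_right h3 (keys_subtreeAt_subset this)
      rw [if_neg hro]
      exact iha h3 hs
    · subst hc
      rw [subtreeAt_self] at hs
      injection hs with e1 e2 e3
      subst e1; subst e3
      rcases hor with h | h
      · cases a with
        | leaf => simp at h
        | node a1 w b1 =>
          have hr2 : x = w := by simpa using h.symm
          subst hr2
          rw [parentKey_lt (h1 _ (mem_keys_node.2 (Or.inr (Or.inl rfl))))]
          rw [if_pos (by simp)]
      · cases b with
        | leaf => simp at h
        | node a1 w b1 =>
          have hr2 : x = w := by simpa using h.symm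
          subst hr2
          rw [parentKey_gt (h2 _ (mem_keys_node.2 (Or.inr (Or.inl rfl))))]
          rw [if_pos (by simp)]
    · rw [subtreeAt_gt hc] at hs
      have hxb : x ∈ b.keys := keys_subtreeAt_subset (hs ▸ hxS)
      rw [parentKey_gt (h2 _ hxb)]
      have hro : b.rootKey ≠ some x := by
        intro hr
        cases b with
        | leaf => simp at hr
        | node a1 w b1 =>
          have hr2 : x = w := by simpa using hr.symm
          subst hr2
          rcases lt_trichotomy y x with h5 | h5 | h5
          · rw [subtreeAt_lt h5] at hs
            have : x ∈ (BT.node l y r).keys := hxS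
            rw [← hs] at this
            exact not_mem_left h4 (keys_subtreeAt_subset this)
          · exact absurd h5.symm hxy
          · rw [subtreeAt_gt h5] at hs
            have : x ∈ (BT.node l y r).keys := hxS
            rw [← hs] at this
            exact not_mem_right h4 (keys_subtreeAt_subset this)
      rw [if_neg hro]
      exact ihb h4 hs

/-! ### rebuild / splayLoop machinery -/

lemma rebuild_nil (t : BT α) : BT.rebuild t [] = t := rfl
lemma rebuild_inL (t : BT α) (v : α) (r : BT α) (cs : List (BT.Ctx α)) :
    BT.rebuild t (BT.Ctx.inL v r :: cs) = BT.rebuild (BT.node t v r) cs := rfl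
lemma rebuild_inR (t : BT α) (l : BT α) (v : α) (cs : List (BT.Ctx α)) :
    BT.rebuild t (BT.Ctx.inR l v :: cs) = BT.rebuild (BT.node l v t) cs := rfl

lemma bst_rebuild_down {cs : List (BT.Ctx α)} : ∀ {t : BT α},
    (BT.rebuild t cs).IsBST → t.IsBST := by
  induction cs with
  | nil => intro t h; exact h
  | cons c cs ih =>
    intro t h
    cases c with
    | inL v r => exact (bst_node.1 (ih (t := BT.node t v r) h)).2.2.1
    | inR l v => exact (bst_node.1 (ih (t := BT.node l v t) h)).2.2.2

lemma keys_rebuild_congr {cs : List (BT.Ctx α)} : ∀ {t t' : BT α},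
    t'.keys = t.keys → (BT.rebuild t' cs).keys = (BT.rebuild t cs).keys := by
  induction cs with
  | nil => intro t t' h; exact h
  | cons c cs ih =>
    intro t t' h
    cases c with
    | inL v r => exact ih (t := BT.node t v r) (by simp [BT.keys, h])
    | inR l v => exact ih (t := BT.node l v t) (by simp [BT.keys, h])

lemma bst_rebuild_congr {cs : List (BT.Ctx α)} : ∀ {t t' : BT α},
    (BT.rebuild t cs).IsBST → t'.IsBST → t'.keys = t.keys → (BT.rebuild t' cs).IsBST := by
  induction cs with
  | nil => intro t t' h h' _; exact h'
  | cons c cs ih =>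
    intro t t' h h' hk
    cases c with
    | inL v r =>
      refine ih (t := BT.node t v r) h ?_ (by simp [BT.keys, hk])
      obtain ⟨h1, h2, h3, h4⟩ := bst_node.1 (bst_rebuild_down h)
      exact bst_node.2 ⟨fun y hy => h1 y (hk ▸ hy), h2, h', h4⟩
    | inR l v =>
      refine ih (t := BT.node l v t) h ?_ (by simp [BT.keys, hk])
      obtain ⟨h1, h2, h3, h4⟩ := bst_node.1 (bst_rebuild_down h)
      exact bst_node.2 ⟨h1, fun y hy => h2 y (hk ▸ hy), h3, h'⟩

/-! rotations -/

lemma mem_node_self {l r : BT α} {v : α} : v ∈ (BT.node l v r).keys :=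
  mem_keys_node.2 (Or.inr (Or.inl rfl))

lemma rot_zigL {a b r : BT α} {x v : α} (h : (BT.node (BT.node a x b) v r).IsBST) :
    (BT.node a x (BT.node b v r)).IsBST ∧
    (BT.node a x (BT.node b v r)).keys = (BT.node (BT.node a x b) v r).keys := by
  obtain ⟨h1, h2, hab, hr⟩ := bst_node.1 h
  obtain ⟨ha1, ha2, ha3, ha4⟩ := bst_node.1 hab
  have hxv : x < v := h1 _ mem_node_self
  refine ⟨bst_node.2 ⟨ha1, ?_, ha3, bst_node.2 ⟨fun y hy => h1 _ (mem_keys_node.2 (Or.inr (Or.inr hy))), h2, ha4, hr⟩⟩, by simp [BT.keys]⟩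
  intro y hy
  rcases mem_keys_node.1 hy with hy | hy | hy
  · exact ha2 _ hy
  · exact hy ▸ hxv
  · exact lt_trans hxv (h2 _ hy)

lemma rot_zigR {l a b : BT α} {x v : α} (h : (BT.node l v (BT.node a x b)).IsBST) :
    (BT.node (BT.node l v a) x b).IsBST ∧
    (BT.node (BT.node l v a) x b).keys = (BT.node l v (BT.node a x b)).keys := by
  obtain ⟨h1, h2, hl, hab⟩ := bst_node.1 h
  obtain ⟨ha1, ha2, ha3, ha4⟩ := bst_node.1 hab
  have hvx : v < x := h2 _ mem_node_self
  refine ⟨bst_node.2 ⟨?_, ha2, bst_node.2 ⟨h1, fun y hy => h2 _ (mem_keys_node.2 (Or.inl hy)), hl, ha3⟩, ha4⟩, by simp [BT.keys]⟩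
  intro y hy
  rcases mem_keys_node.1 hy with hy | hy | hy
  · exact lt_trans (h1 _ hy) hvx
  · exact hy ▸ hvx
  · exact ha1 _ hy

lemma bst_replace_left {l l' r : BT α} {v : α} (h : (BT.node l v r).IsBST)
    (h' : l'.IsBST) (hk : l'.keys = l.keys) : (BT.node l' v r).IsBST :=
  bst_node.2 ⟨fun y hy => h.1 y (hk ▸ hy), h.2.1, h', h.2.2.2⟩

lemma bst_replace_right {l r r' : BT α} {v : α} (h : (BT.node l v r).IsBST)
    (h' : r'.IsBST) (hk : r'.keys = r.keys) : (BT.node l v r').IsBST :=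
  bst_node.2 ⟨h.1, fun y hy => h.2.1 y (hk ▸ hy), h.2.2.1, h'⟩

lemma rot_zigzigL {a b pr gr : BT α} {x p g : α}
    (h : (BT.node (BT.node (BT.node a x b) p pr) g gr).IsBST) :
    (BT.node a x (BT.node b p (BT.node pr g gr))).IsBST ∧
    (BT.node a x (BT.node b p (BT.node pr g gr))).keys =
      (BT.node (BT.node (BT.node a x b) p pr) g gr).keys := by
  obtain ⟨h1, hk1⟩ := rot_zigL h
  obtain ⟨h2, hk2⟩ := rot_zigL h1
  exact ⟨h2, hk2.trans hk1⟩

lemma rot_zigzigR {gl pl a b : BT α} {g p x : α}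
    (h : (BT.node gl g (BT.node pl p (BT.node a x b))).IsBST) :
    (BT.node (BT.node (BT.node gl g pl) p a) x b).IsBST ∧
    (BT.node (BT.node (BT.node gl g pl) p a) x b).keys =
      (BT.node gl g (BT.node pl p (BT.node a x b))).keys := by
  obtain ⟨h1, hk1⟩ := rot_zigR h
  obtain ⟨h2, hk2⟩ := rot_zigR h1
  exact ⟨h2, hk2.trans hk1⟩

lemma rot_zigzagLR {gl a b pr : BT α} {g x p : α}
    (h : (BT.node gl g (BT.node (BT.node a x b) p pr)).IsBST) :
    (BT.node (BT.node gl g a) x (BT.node b p pr)).IsBST ∧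
    (BT.node (BT.node gl g a) x (BT.node b p pr)).keys =
      (BT.node gl g (BT.node (BT.node a x b) p pr)).keys := by
  obtain ⟨hg1, hg2, hgl, hin⟩ := bst_node.1 h
  obtain ⟨h1, hk1⟩ := rot_zigL hin
  have h2 : (BT.node gl g (BT.node a x (BT.node b p pr))).IsBST :=
    bst_replace_right h h1 hk1
  obtain ⟨h3, hk3⟩ := rot_zigR h2
  refine ⟨h3, hk3.trans ?_⟩
  simp [BT.keys]

lemma rot_zigzagRL {pl a b gr : BT α} {p x g : α}
    (h : (BT.node (BT.node pl p (BT.node a x b)) g gr).IsBST) :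
    (BT.node (BT.node pl p a) x (BT.node b g gr)).IsBST ∧
    (BT.node (BT.node pl p a) x (BT.node b g gr)).keys =
      (BT.node (BT.node pl p (BT.node a x b)) g gr).keys := by
  obtain ⟨hg1, hg2, hin, hgr⟩ := bst_node.1 h
  obtain ⟨h1, hk1⟩ := rot_zigR hin
  have h2 : (BT.node (BT.node (BT.node pl p a) x b) g gr).IsBST :=
    bst_replace_left h h1 hk1
  obtain ⟨h3, hk3⟩ := rot_zigL h2
  refine ⟨h3, hk3.trans ?_⟩
  simp [BT.keys]

/-- Master lemma: splayLoop preserves BST-ness and keys relative to rebuild. -/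
lemma splayLoop_spec : ∀ (t : BT α) (cs : List (BT.Ctx α)),
    (BT.rebuild t cs).IsBST →
    (BT.splayLoop t cs).IsBST ∧ (BT.splayLoop t cs).keys = (BT.rebuild t cs).keys := by
  intro t cs
  induction t, cs using BT.splayLoop.induct with
  | case1 t => intro h; cases t <;> exact ⟨h, rfl⟩
  | case2 a x b v r =>
    intro h
    rw [rebuild_inL, rebuild_nil] at h ⊢
    exact ⟨(rot_zigL h).1, (rot_zigL h).2⟩
  | case3 a x b l v =>
    intro h
    rw [rebuild_inR, rebuild_nil] at h ⊢
    exact ⟨(rot_zigR h).1, (rot_zigR h).2⟩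
  | case4 a x b p pr g gr cs ih =>
    intro h
    rw [rebuild_inL, rebuild_inL] at h
    have h0 := bst_rebuild_down h
    obtain ⟨hb, hk⟩ := rot_zigzigL h0
    have h2 := bst_rebuild_congr h hb hk
    obtain ⟨hb2, hk2⟩ := ih h2
    exact ⟨hb2, hk2.trans (keys_rebuild_congr hk)⟩
  | case5 a x b p pr gl g cs ih =>
    intro h
    rw [rebuild_inL, rebuild_inR] at h
    have h0 := bst_rebuild_down h
    obtain ⟨hb, hk⟩ := rot_zigzagLR h0
    have h2 := bst_rebuild_congr h hb hk
    obtain ⟨hb2, hk2⟩ := ih h2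
    exact ⟨hb2, hk2.trans (keys_rebuild_congr hk)⟩
  | case6 a x b pl p gl g cs ih =>
    intro h
    rw [rebuild_inR, rebuild_inR] at h
    have h0 := bst_rebuild_down h
    obtain ⟨hb, hk⟩ := rot_zigzigR h0
    have h2 := bst_rebuild_congr h hb hk
    obtain ⟨hb2, hk2⟩ := ih h2
    exact ⟨hb2, hk2.trans (keys_rebuild_congr hk)⟩
  | case7 a x b pl p g gr cs ih =>
    intro h
    rw [rebuild_inR, rebuild_inL] at h
    have h0 := bst_rebuild_down h
    obtain ⟨hb, hk⟩ := rot_zigzagRL h0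
    have h2 := bst_rebuild_congr h hb hk
    obtain ⟨hb2, hk2⟩ := ih h2
    exact ⟨hb2, hk2.trans (keys_rebuild_congr hk)⟩
  | case8 cs hne =>
    intro h
    match cs with
    | [] => exact ⟨h, rfl⟩
    | BT.Ctx.inL v r :: cs => rw [BT.splayLoop.eq_8 _ (by simp)]; exact ⟨h, rfl⟩
    | BT.Ctx.inR l v :: cs => rw [BT.splayLoop.eq_8 _ (by simp)]; exact ⟨h, rfl⟩

lemma descend_lt {l r : BT α} {v x : α} (h : x < v) (acc : List (BT.Ctx α)) :
    BT.descend (BT.node l v r) x acc = BT.descend l x (BT.Ctx.inL v r :: acc) := by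
  simp [BT.descend, h]

lemma descend_gt {l r : BT α} {v x : α} (h : v < x) (acc : List (BT.Ctx α)) :
    BT.descend (BT.node l v r) x acc = BT.descend r x (BT.Ctx.inR l v :: acc) := by
  simp [BT.descend, h, not_lt_of_gt h]

lemma descend_self {l r : BT α} {v : α} (acc : List (BT.Ctx α)) :
    BT.descend (BT.node l v r) v acc = (acc, BT.node l v r) := by
  simp [BT.descend]

lemma descend_rebuild {x : α} : ∀ {t : BT α} (acc),
    BT.rebuild (BT.descend t x acc).2 (BT.descend t x acc).1 = BT.rebuild t acc := by
  intro t
  induction t with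
  | leaf => intro acc; rfl
  | node l v r ihl ihr =>
    intro acc
    rcases lt_trichotomy x v with hc | hc | hc
    · rw [descend_lt hc]; exact ihl _
    · subst hc; rw [descend_self]
    · rw [descend_gt hc]; exact ihr _

def inR2 (p : BT α × α) : BT.Ctx α := BT.Ctx.inR p.1 p.2

lemma descend_spec0 {x : α} : ∀ {t : BT α} (acc), t.leftDepthKey x = 0 →
    ∃ us : List (BT α × α),
      BT.descend t x acc = (us.map inR2 ++ acc, t.subtreeAt x) := by
  intro t
  induction t with
  | leaf => intro acc _; exact ⟨[], by simp [BT.descend, BT.subtreeAt]⟩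
  | node l v r ihl ihr =>
    intro acc hld
    rcases lt_trichotomy x v with hc | hc | hc
    · rw [leftDepthKey_lt hc] at hld; omega
    · subst hc
      exact ⟨[], by simp [descend_self, subtreeAt_self]⟩
    · rw [leftDepthKey_gt hc] at hld
      obtain ⟨us, hus⟩ := ihr (BT.Ctx.inR l v :: acc) hld
      refine ⟨us ++ [(l, v)], ?_⟩
      rw [descend_gt hc, hus, subtreeAt_gt hc]
      simp [inR2]

lemma descend_spec1 {x : α} : ∀ {t : BT α} (acc), t.leftDepthKey x = 1 →
    ∃ (ws : List (BT α × α)) (w : α) (Wl Wr : BT α) (us : List (BT α × α)),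
      BT.descend t x acc =
        ((ws.map inR2 ++ BT.Ctx.inL w Wr :: us.map inR2) ++ acc, t.subtreeAt x) ∧
      x < w ∧ t.subtreeAt w = BT.node Wl w Wr ∧ Wl.subtreeAt x = t.subtreeAt x := by
  intro t
  induction t with
  | leaf => intro acc h; simp [BT.leftDepthKey] at h
  | node l v r ihl ihr =>
    intro acc hld
    rcases lt_trichotomy x v with hc | hc | hc
    · rw [leftDepthKey_lt hc] at hld
      have h0 : l.leftDepthKey x = 0 := by omega
      obtain ⟨us, hus⟩ := descend_spec0 (BT.Ctx.inL v r :: acc) h0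
      refine ⟨us, v, l, r, [], ?_, hc, subtreeAt_self, (subtreeAt_lt hc).symm⟩
      rw [descend_lt hc, hus, subtreeAt_lt hc]
      simp
    · subst hc; rw [leftDepthKey_self] at hld; omega
    · rw [leftDepthKey_gt hc] at hld
      obtain ⟨ws, w, Wl, Wr, us, hus, hxw, hsw, hwl⟩ := ihr (BT.Ctx.inR l v :: acc) hld
      refine ⟨ws, w, Wl, Wr, us ++ [(l, v)], ?_, hxw, ?_, ?_⟩
      · rw [descend_gt hc, hus, subtreeAt_gt hc]
        simp [inR2]
      · rw [subtreeAt_gt (lt_trans hc hxw)]; exact hsw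
      · rw [subtreeAt_gt hc]; exact hwl

lemma splay_eq_splayLoop {t : BT α} {x : α} {cs : List (BT.Ctx α)} {A B : BT α}
    (hd : BT.descend t x [] = (cs, BT.node A x B)) :
    BT.splay x t = BT.splayLoop (BT.node A x B) cs := by
  unfold BT.splay
  rw [hd]

lemma splay_spec {t : BT α} (hb : t.IsBST) (x : α) :
    (BT.splay x t).IsBST ∧ (BT.splay x t).keys = t.keys := by
  unfold BT.splay
  rcases hdd : BT.descend t x [] with ⟨cs, s⟩
  have hre : BT.rebuild s cs = t := by
    have := descend_rebuild (x := x) (t := t) []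
    rw [hdd] at this
    exact this
  cases s with
  | leaf => exact ⟨hb, rfl⟩
  | node A y B =>
    have := splayLoop_spec (BT.node A y B) cs (by rw [hre]; exact hb)
    rw [hre] at this
    exact this

/-- `Ext A L`: `A` sits at the end of the right spine of `L`. -/
inductive Ext (A : BT α) : BT α → Prop
  | refl : Ext A A
  | step {C : BT α} {v : α} {D : BT α} : Ext A D → Ext A (BT.node C v D)

lemma Ext.trans {A B C : BT α} (h1 : Ext A B) (h2 : Ext B C) : Ext A C := by
  induction h2 with
  | refl => exact h1
  | step h ih => exact Ext.step ih

lemma ext_keys {A L : BT α} (h : Ext A L) : ∀ q ∈ A.keys, q ∈ L.keys := by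
  induction h with
  | refl => exact fun q hq => hq
  | step h ih => exact fun q hq => mem_keys_node.2 (Or.inr (Or.inr (ih q hq)))

lemma ext_ld {A L : BT α} (h : Ext A L) (hb : L.IsBST) {q : α} (hq : q ∈ A.keys) :
    L.leftDepthKey q = A.leftDepthKey q := by
  induction h with
  | refl => rfl
  | @step C v D h ih =>
    obtain ⟨h1, h2, h3, h4⟩ := bst_node.1 hb
    have hvq : v < q := h2 _ (ext_keys h _ hq)
    rw [leftDepthKey_gt hvq]
    exact ih h4

lemma ext_subtree {A L : BT α} (h : Ext A L) (hb : L.IsBST) {q : α} (hq : q ∈ A.keys) :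
    L.subtreeAt q = A.subtreeAt q := by
  induction h with
  | refl => rfl
  | @step C v D h ih =>
    obtain ⟨h1, h2, h3, h4⟩ := bst_node.1 hb
    have hvq : v < q := h2 _ (ext_keys h _ hq)
    rw [subtreeAt_gt hvq]
    exact ih h4

lemma ext_root_ne {A L : BT α} (h : Ext A L) (hb : L.IsBST) {q : α} (hq : q ∈ A.keys)
    (hr : A.rootKey ≠ some q) : L.rootKey ≠ some q := by
  induction h with
  | refl => exact hr
  | @step C v D h ih =>
    obtain ⟨h1, h2, h3, h4⟩ := bst_node.1 hb
    have hvq : v < q := h2 _ (ext_keys h _ hq)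
    intro hc
    have : v = q := by simpa using hc
    exact absurd this (ne_of_lt hvq)

lemma ext_parent {A L : BT α} (h : Ext A L) (hb : L.IsBST) {q : α} (hq : q ∈ A.keys)
    (hr : A.rootKey ≠ some q) : L.parentKey q = A.parentKey q := by
  induction h with
  | refl => rfl
  | @step C v D h ih =>
    obtain ⟨h1, h2, h3, h4⟩ := bst_node.1 hb
    have hvq : v < q := h2 _ (ext_keys h _ hq)
    rw [parentKey_gt hvq, if_neg (ext_root_ne h h4 hq hr)]
    exact ih h4

/-- The left-accumulation function describing zig-zig chains of right-contexts. -/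
def lacc : BT α → List (BT α × α) → BT α
  | a, [] => a
  | a, [(l, v)] => BT.node l v a
  | a, (pl, p) :: (gl, g) :: rest => lacc (BT.node (BT.node gl g pl) p a) rest

lemma ext_lacc (a : BT α) : ∀ us : List (BT α × α), Ext a (lacc a us) := by
  intro us
  induction a, us using lacc.induct with
  | case1 a => exact Ext.refl
  | case2 a l v => exact Ext.step Ext.refl
  | case3 a pl p gl g rest ih =>
    exact Ext.trans (Ext.step Ext.refl) ih

/-- Splaying along a pure chain of right-contexts. -/
lemma splayLoop_allR (x : α) : ∀ (a : BT α) (us : List (BT α × α)) (b : BT α),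
    BT.splayLoop (BT.node a x b) (us.map inR2) = BT.node (lacc a us) x b := by
  intro a us
  induction a, us using lacc.induct with
  | case1 a => intro b; rfl
  | case2 a l v => intro b; rfl
  | case3 a pl p gl g rest ih =>
    intro b
    show BT.splayLoop (BT.node a x b) (BT.Ctx.inR pl p :: BT.Ctx.inR gl g :: rest.map inR2) = _
    rw [show BT.splayLoop (BT.node a x b) (BT.Ctx.inR pl p :: BT.Ctx.inR gl g :: rest.map inR2)
        = BT.splayLoop (BT.node (BT.node (BT.node gl g pl) p a) x b) (rest.map inR2) from rfl]
    exact ih b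

/-- Splaying along rights, one left, then rights. -/
lemma splayLoop_oneL (x w : α) (Wr : BT α) :
    ∀ (a : BT α) (ws : List (BT α × α)) (us : List (BT α × α)) (b : BT α),
    ∃ L', BT.splayLoop (BT.node a x b)
        (ws.map inR2 ++ BT.Ctx.inL w Wr :: us.map inR2) =
        BT.node L' x (BT.node b w Wr) ∧ Ext a L' := by
  intro a ws
  induction a, ws using lacc.induct with
  | case1 a =>
    intro us b
    match us with
    | [] => exact ⟨a, rfl, Ext.refl⟩
    | (gl, g) :: us' =>
      refine ⟨lacc (BT.node gl g a) us', ?_, Ext.trans (Ext.step Ext.refl) (ext_lacc _ _)⟩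
      show BT.splayLoop (BT.node a x b) (BT.Ctx.inL w Wr :: BT.Ctx.inR gl g :: us'.map inR2) = _
      rw [show BT.splayLoop (BT.node a x b) (BT.Ctx.inL w Wr :: BT.Ctx.inR gl g :: us'.map inR2)
          = BT.splayLoop (BT.node (BT.node gl g a) x (BT.node b w Wr)) (us'.map inR2) from rfl]
      exact splayLoop_allR x _ us' _
  | case2 a pl p =>
    intro us b
    refine ⟨lacc (BT.node pl p a) us, ?_, Ext.trans (Ext.step Ext.refl) (ext_lacc _ _)⟩
    show BT.splayLoop (BT.node a x b) (BT.Ctx.inR pl p :: BT.Ctx.inL w Wr :: us.map inR2) = _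
    rw [show BT.splayLoop (BT.node a x b) (BT.Ctx.inR pl p :: BT.Ctx.inL w Wr :: us.map inR2)
        = BT.splayLoop (BT.node (BT.node pl p a) x (BT.node b w Wr)) (us.map inR2) from rfl]
    exact splayLoop_allR x _ us _
  | case3 a pl p gl g ws' ih =>
    intro us b
    obtain ⟨L', hL', hext⟩ := ih us b
    refine ⟨L', ?_, Ext.trans (Ext.step Ext.refl) hext⟩
    show BT.splayLoop (BT.node a x b)
        (BT.Ctx.inR pl p :: BT.Ctx.inR gl g :: (ws'.map inR2 ++ BT.Ctx.inL w Wr :: us.map inR2)) = _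
    rw [show BT.splayLoop (BT.node a x b)
        (BT.Ctx.inR pl p :: BT.Ctx.inR gl g :: (ws'.map inR2 ++ BT.Ctx.inL w Wr :: us.map inR2))
        = BT.splayLoop (BT.node (BT.node (BT.node gl g pl) p a) x b)
          (ws'.map inR2 ++ BT.Ctx.inL w Wr :: us.map inR2) from rfl]
    exact hL'

/-! ### insertKey and bstOf -/

lemma insertKey_lt {l r : BT α} {v x : α} (h : x < v) :
    (BT.node l v r).insertKey x = BT.node (l.insertKey x) v r := by simp [BT.insertKey, h]

lemma insertKey_gt {l r : BT α} {v x : α} (h : v < x) :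
    (BT.node l v r).insertKey x = BT.node l v (r.insertKey x) := by
  simp [BT.insertKey, h, not_lt_of_gt h]

lemma insertKey_self {l r : BT α} {v : α} :
    (BT.node l v r).insertKey v = BT.node l v r := by simp [BT.insertKey]

lemma insertKey_leaf (x : α) : (BT.leaf : BT α).insertKey x = BT.node BT.leaf x BT.leaf := rfl

lemma mem_insertKey {t : BT α} {z q : α} :
    q ∈ (t.insertKey z).keys ↔ q = z ∨ q ∈ t.keys := by
  induction t with
  | leaf => simp [insertKey_leaf, BT.keys]
  | node l v r ihl ihr =>
    rcases lt_trichotomy z v with hc | hc | hc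
    · rw [insertKey_lt hc, mem_keys_node, mem_keys_node, ihl]; tauto
    · subst hc; rw [insertKey_self, mem_keys_node]; tauto
    · rw [insertKey_gt hc, mem_keys_node, mem_keys_node, ihr]; tauto

lemma bst_insertKey {t : BT α} (hb : t.IsBST) (z : α) : (t.insertKey z).IsBST := by
  induction t with
  | leaf => exact ⟨by simp [BT.keys], by simp [BT.keys], trivial, trivial⟩
  | node l v r ihl ihr =>
    obtain ⟨h1, h2, h3, h4⟩ := bst_node.1 hb
    rcases lt_trichotomy z v with hc | hc | hc
    · rw [insertKey_lt hc]
      refine bst_node.2 ⟨?_, h2, ihl h3, h4⟩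
      intro y hy
      rcases mem_insertKey.1 hy with h | h
      · exact h ▸ hc
      · exact h1 _ h
    · subst hc; rwa [insertKey_self]
    · rw [insertKey_gt hc]
      refine bst_node.2 ⟨h1, ?_, h3, ihr h4⟩
      intro y hy
      rcases mem_insertKey.1 hy with h | h
      · exact h ▸ hc
      · exact h2 _ h

lemma insertKey_ne_leaf {t : BT α} {z : α} : t.insertKey z ≠ BT.leaf := by
  cases t with
  | leaf => simp [insertKey_leaf]
  | node l v r =>
    rcases lt_trichotomy z v with hc | hc | hc
    · rw [insertKey_lt hc]; simp
    · subst hc; rw [insertKey_self]; simp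
    · rw [insertKey_gt hc]; simp

lemma rootKey_insertKey {t : BT α} (h : t ≠ BT.leaf) (z : α) :
    (t.insertKey z).rootKey = t.rootKey := by
  cases t with
  | leaf => exact absurd rfl h
  | node l v r =>
    rcases lt_trichotomy z v with hc | hc | hc
    · rw [insertKey_lt hc]; rfl
    · subst hc; rw [insertKey_self]
    · rw [insertKey_gt hc]; rfl

lemma bst_foldl {l : List α} : ∀ {t : BT α}, t.IsBST → (l.foldl BT.insertKey t).IsBST := by
  induction l with
  | nil => exact fun h => h
  | cons z l ih => exact fun h => ih (bst_insertKey h z)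

lemma mem_foldl {l : List α} : ∀ {t : BT α} {q : α},
    q ∈ (l.foldl BT.insertKey t).keys ↔ q ∈ l ∨ q ∈ t.keys := by
  induction l with
  | nil => simp
  | cons z l ih =>
    intro t q
    simp only [List.foldl_cons, ih, mem_insertKey, List.mem_cons]
    tauto

lemma foldl_ne_leaf {l : List α} : ∀ {t : BT α}, t ≠ BT.leaf →
    l.foldl BT.insertKey t ≠ BT.leaf := by
  induction l with
  | nil => exact fun h => h
  | cons z l ih => exact fun _ => ih insertKey_ne_leaf

lemma rootKey_foldl {l : List α} : ∀ {t : BT α}, t ≠ BT.leaf →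
    (l.foldl BT.insertKey t).rootKey = t.rootKey := by
  induction l with
  | nil => exact fun _ => rfl
  | cons z l ih =>
    intro t h
    rw [List.foldl_cons, ih insertKey_ne_leaf, rootKey_insertKey h]

lemma bst_bstOf (π : List α) : (bstOf π).IsBST := bst_foldl trivial

lemma mem_bstOf {π : List α} {q : α} : q ∈ (bstOf π).keys ↔ q ∈ π := by
  unfold bstOf
  rw [mem_foldl]
  simp [BT.keys]

lemma insertKey_mem_noop {t : BT α} (hb : t.IsBST) {z : α} (hz : z ∈ t.keys) :
    t.insertKey z = t := by
  induction t with
  | leaf => simp [BT.keys] at hz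
  | node l v r ihl ihr =>
    obtain ⟨h1, h2, h3, h4⟩ := bst_node.1 hb
    rcases mem_keys_node.1 hz with h | h | h
    · rw [insertKey_lt (h1 _ h), ihl h3 h]
    · subst h; exact insertKey_self
    · rw [insertKey_gt (h2 _ h), ihr h4 h]

lemma parentKey_insert_old {t : BT α} (hb : t.IsBST) {q : α} (hq : q ∈ t.keys) (z : α) :
    (t.insertKey z).parentKey q = t.parentKey q := by
  induction t with
  | leaf => simp [BT.keys] at hq
  | node l v r ihl ihr =>
    obtain ⟨h1, h2, h3, h4⟩ := bst_node.1 hb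
    rcases lt_trichotomy z v with hc | hc | hc
    · rw [insertKey_lt hc]
      rcases lt_trichotomy q v with hq' | hq' | hq'
      · rw [parentKey_lt hq', parentKey_lt hq']
        have hql : q ∈ l.keys := by
          rcases mem_keys_node.1 hq with h | h | h
          · exact h
          · exact absurd (h ▸ hq') (lt_irrefl _)
          · exact absurd (lt_trans hq' (h2 _ h)) (lt_irrefl _)
        have hlne : l ≠ BT.leaf := by
          intro he; rw [he] at hql; simp [BT.keys] at hql
        rw [rootKey_insertKey hlne, ihl h3 hql]
      · subst hq'; rw [parentKey_self, parentKey_self]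
      · rw [parentKey_gt hq', parentKey_gt hq']
    · subst hc; rw [insertKey_self]
    · rw [insertKey_gt hc]
      rcases lt_trichotomy q v with hq' | hq' | hq'
      · rw [parentKey_lt hq', parentKey_lt hq']
      · subst hq'; rw [parentKey_self, parentKey_self]
      · rw [parentKey_gt hq', parentKey_gt hq']
        have hqr : q ∈ r.keys := by
          rcases mem_keys_node.1 hq with h | h | h
          · exact absurd (lt_trans (h1 _ h) hq') (lt_irrefl _)
          · exact absurd (h ▸ hq') (lt_irrefl _)
          · exact h
        have hrne : r ≠ BT.leaf := by
          intro he; rw [he] at hqr; simp [BT.keys] at hqr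
        rw [rootKey_insertKey hrne, ihr h4 hqr]

lemma parentKey_insert_new {t : BT α} (hb : t.IsBST) {z y : α}
    (h : (t.insertKey z).parentKey z = some y) : y ∈ t.keys := by
  induction t with
  | leaf => rw [insertKey_leaf, parentKey_self] at h; simp at h
  | node l v r ihl ihr =>
    obtain ⟨h1, h2, h3, h4⟩ := bst_node.1 hb
    rcases lt_trichotomy z v with hc | hc | hc
    · rw [insertKey_lt hc, parentKey_lt hc] at h
      by_cases hro : (l.insertKey z).rootKey = some z
      · rw [if_pos hro] at h
        have : y = v := by simpa using h.symm
        exact this ▸ mem_node_self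
      · rw [if_neg hro] at h
        exact mem_keys_node.2 (Or.inl (ihl h3 h))
    · subst hc; rw [insertKey_self, parentKey_self] at h; simp at h
    · rw [insertKey_gt hc, parentKey_gt hc] at h
      by_cases hro : (r.insertKey z).rootKey = some z
      · rw [if_pos hro] at h
        have : y = v := by simpa using h.symm
        exact this ▸ mem_node_self
      · rw [if_neg hro] at h
        exact mem_keys_node.2 (Or.inr (Or.inr (ihr h4 h)))

lemma bstOf_append_singleton (π : List α) (z : α) :
    bstOf (π ++ [z]) = (bstOf π).insertKey z := by
  unfold bstOf
  rw [List.foldl_append]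
  rfl

lemma parent_before {π : List α} (hnd : π.Nodup) {q y : α}
    (h : (bstOf π).parentKey q = some y) :
    ∀ n, q ∈ π.take n → y ∈ π.take n := by
  induction π using List.reverseRecOn with
  | nil => simp [bstOf, BT.parentKey] at h
  | append_singleton π' z ih =>
    have hnd' : π'.Nodup := hnd.of_append_left
    have hzπ : z ∉ π' := by
      intro hz
      have := List.disjoint_of_nodup_append hnd
      exact this hz (by simp)
    rw [bstOf_append_singleton] at h
    by_cases hq : q = z
    · subst hq
      have hznk : q ∉ (bstOf π').keys := fun hk => hzπ (mem_bstOf.1 hk)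
      have hy : y ∈ π' := mem_bstOf.1 (parentKey_insert_new (bst_bstOf π') h)
      intro n hn
      rw [List.take_append] at hn ⊢
      rcases List.mem_append.1 hn with h1 | h1
      · exact absurd (List.mem_of_mem_take h1) hzπ
      · have hlen : π'.length < n := by
          by_contra hle
          push_neg at hle
          have : n - π'.length = 0 := by omega
          rw [this] at h1
          simp at h1
        have : π'.take n = π' := List.take_of_length_le (by omega)
        rw [this]
        exact List.mem_append.2 (Or.inl hy)
    · have hqk : q ∈ (bstOf π').keys := by
        rcases mem_insertKey.1 (pk_mem_ne h).2.1 with h1 | h1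
        · exact absurd h1 hq
        · exact h1
      rw [parentKey_insert_old (bst_bstOf π') hqk] at h
      intro n hn
      rw [List.take_append] at hn ⊢
      rcases List.mem_append.1 hn with h1 | h1
      · exact List.mem_append.2 (Or.inl (ih hnd' h n h1))
      · have : q = z := by
          have := List.mem_of_mem_take h1
          simpa using this
        exact absurd this hq

/-- Inserting q below x: if every key of t strictly between q and x is already
in x's subtree, then q lands in x's subtree. -/
lemma insert_into_subtree {t : BT α} (hb : t.IsBST) {x q : α}
    (hx : x ∈ t.keys) (hq : q ∉ t.keys) (hqx : q < x)
    (hmid : ∀ z ∈ t.keys, q < z → z < x → z ∈ (t.subtreeAt x).keys) :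
    q ∈ ((t.insertKey q).subtreeAt x).keys := by
  induction t with
  | leaf => simp [BT.keys] at hx
  | node l v r ihl ihr =>
    obtain ⟨h1, h2, h3, h4⟩ := bst_node.1 hb
    rcases lt_trichotomy x v with hc | hc | hc
    · have hqv : q < v := lt_trans hqx hc
      rw [insertKey_lt hqv, subtreeAt_lt hc]
      have hxl : x ∈ l.keys := by
        rcases mem_keys_node.1 hx with h | h | h
        · exact h
        · exact absurd (h ▸ hc) (lt_irrefl _)
        · exact absurd (lt_trans hc (h2 _ h)) (lt_irrefl _)
      refine ihl h3 hxl (fun hql => hq (mem_keys_node.2 (Or.inl hql))) ?_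
      intro z hz hqz hzx
      have := hmid z (mem_keys_node.2 (Or.inl hz)) hqz hzx
      rwa [subtreeAt_lt hc] at this
    · subst hc
      rw [insertKey_lt hqx, subtreeAt_self]
      exact mem_keys_node.2 (Or.inl (mem_insertKey.2 (Or.inl rfl)))
    · rcases lt_trichotomy q v with hc2 | hc2 | hc2
      · exfalso
        have := hmid v mem_node_self hc2 hc
        rw [subtreeAt_gt hc] at this
        exact not_mem_right (bst_node.2 ⟨h1, h2, h3, h4⟩) (keys_subtreeAt_subset this)
      · exact absurd (mem_keys_node.2 (Or.inr (Or.inl hc2))) hq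
      · rw [insertKey_gt hc2, subtreeAt_gt hc]
        have hxr : x ∈ r.keys := by
          rcases mem_keys_node.1 hx with h | h | h
          · exact absurd (lt_trans hc (h1 _ h)) (lt_irrefl _)
          · exact absurd (h ▸ hc) (lt_irrefl _)
          · exact h
        refine ihr h4 hxr (fun hqr => hq (mem_keys_node.2 (Or.inr (Or.inr hqr)))) ?_
        intro z hz hqz hzx
        have := hmid z (mem_keys_node.2 (Or.inr (Or.inr hz))) hqz hzx
        rwa [subtreeAt_gt hc] at this

/-- Membership in a subtree is preserved by later insertions. -/
lemma subtree_mem_insert {t : BT α} {x q z : α}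
    (h : q ∈ (t.subtreeAt x).keys) : q ∈ ((t.insertKey z).subtreeAt x).keys := by
  induction t with
  | leaf => simp [BT.subtreeAt, BT.keys] at h
  | node l v r ihl ihr =>
    rcases lt_trichotomy x v with hc | hc | hc
    · rw [subtreeAt_lt hc] at h
      rcases lt_trichotomy z v with hz | hz | hz
      · rw [insertKey_lt hz, subtreeAt_lt hc]; exact ihl h
      · subst hz; rw [insertKey_self, subtreeAt_lt hc]; exact h
      · rw [insertKey_gt hz, subtreeAt_lt hc]; exact h
    · subst hc
      rcases lt_trichotomy z x with hz | hz | hz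
      · rw [insertKey_lt hz, subtreeAt_self]
        rw [subtreeAt_self] at h
        rcases mem_keys_node.1 h with h | h | h
        · exact mem_keys_node.2 (Or.inl (mem_insertKey.2 (Or.inr h)))
        · exact mem_keys_node.2 (Or.inr (Or.inl h))
        · exact mem_keys_node.2 (Or.inr (Or.inr h))
      · subst hz; rw [insertKey_self]; exact h
      · rw [insertKey_gt hz, subtreeAt_self]
        rw [subtreeAt_self] at h
        rcases mem_keys_node.1 h with h | h | h
        · exact mem_keys_node.2 (Or.inl h)
        · exact mem_keys_node.2 (Or.inr (Or.inl h))
        · exact mem_keys_node.2 (Or.inr (Or.inr (mem_insertKey.2 (Or.inr h))))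
    · rw [subtreeAt_gt hc] at h
      rcases lt_trichotomy z v with hz | hz | hz
      · rw [insertKey_lt hz, subtreeAt_gt hc]; exact h
      · subst hz; rw [insertKey_self, subtreeAt_gt hc]; exact h
      · rw [insertKey_gt hz, subtreeAt_gt hc]; exact ihr h

lemma subtree_mem_foldl {l : List α} : ∀ {t : BT α} {x q : α},
    q ∈ (t.subtreeAt x).keys → q ∈ ((l.foldl BT.insertKey t).subtreeAt x).keys := by
  induction l with
  | nil => exact fun h => h
  | cons z l ih => exact fun h => ih (subtree_mem_insert h)

lemma bstOf_take_step {π : List α} {k : ℕ} (hk : k < π.length) :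
    (bstOf (π.take k)).insertKey (π.get ⟨k, hk⟩) = bstOf (π.take (k + 1)) := by
  rw [← bstOf_append_singleton]
  congr 1
  have := List.take_concat_get hk
  simpa [List.concat_eq_append] using this

lemma bstOf_take_extend {π : List α} {m k : ℕ} (hmk : m ≤ k) {x q : α}
    (h : q ∈ ((bstOf (π.take m)).subtreeAt x).keys) :
    q ∈ ((bstOf (π.take k)).subtreeAt x).keys := by
  have : bstOf (π.take k) = ((π.take k).drop m).foldl BT.insertKey (bstOf (π.take m)) := by
    unfold bstOf
    rw [← List.foldl_append]
    congr 1
    conv_lhs => rw [← List.take_append_drop m (π.take k)]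
    rw [List.take_take, Nat.min_eq_left hmk]
  rw [this]
  exact subtree_mem_foldl h

/-- F2: in a (2,3,1)-avoiding nodup sequence, a later smaller key lands in the
subtree of an earlier larger key (in the insertion tree of any sufficient prefix). -/
lemma avoids231_subtree_aux {π : List α} (hnd : π.Nodup) (hav : Avoids231 π) :
    ∀ (k : ℕ) (hk : k < π.length) (j : ℕ) (hj : j < k),
      π.get ⟨k, hk⟩ < π.get ⟨j, lt_trans hj hk⟩ →
      π.get ⟨k, hk⟩ ∈ ((bstOf (π.take (k + 1))).subtreeAt (π.get ⟨j, lt_trans hj hk⟩)).keys := by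
  intro k
  induction k using Nat.strong_induction_on with
  | _ k ih =>
    intro hk j hj hlt
    set x := π.get ⟨j, lt_trans hj hk⟩ with hxdef
    set q := π.get ⟨k, hk⟩ with hqdef
    have hbt := bst_bstOf (π.take k)
    have hxmem : x ∈ π.take k := by
      rw [hxdef]
      refine List.mem_take_iff_getElem.2 ⟨j, by omega, by simp⟩
    have hqnot : q ∉ π.take k := by
      intro hq
      obtain ⟨m, hm, hget⟩ := List.mem_take_iff_getElem.1 hq
      have hm2 := lt_min_iff.1 hm
      have hmk : m = k := by
        refine (List.Nodup.getElem_inj_iff hnd (hi := hm2.2) (hj := hk)).1 ?_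
        simpa [hqdef] using hget
      omega
    have hmid : ∀ z ∈ (bstOf (π.take k)).keys, q < z → z < x →
        z ∈ ((bstOf (π.take k)).subtreeAt x).keys := by
      intro z hz hqz hzx
      have hzπ : z ∈ π.take k := mem_bstOf.1 hz
      obtain ⟨m, hm, hget⟩ := List.mem_take_iff_getElem.1 hzπ
      have hm2 := lt_min_iff.1 hm
      rcases lt_trichotomy m j with hmj | hmj | hmj
      · exfalso
        apply hav
        refine ⟨⟨m, hm2.2⟩, ⟨j, lt_trans hj hk⟩, ⟨k, hk⟩, hmj, hj, ?_, ?_⟩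
        · show q < π.get ⟨m, hm2.2⟩
          rw [show π.get ⟨m, hm2.2⟩ = z from by simpa using hget]
          exact hqz
        · show π.get ⟨m, hm2.2⟩ < x
          rw [show π.get ⟨m, hm2.2⟩ = z from by simpa using hget]
          exact hzx
      · exfalso
        have hxz : x = z := by
          have h5 : π.get ⟨m, hm2.2⟩ = z := by simpa using hget
          rw [hxdef, ← h5]
          congr 1
          exact Fin.ext hmj.symm
        exact absurd hxz (ne_of_gt hzx)
      · have hz2 := ih m hm2.1 hm2.2 j hmj
          (by rw [show π.get ⟨m, hm2.2⟩ = z from by simpa using hget]; exact hzx)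
        rw [show π.get ⟨m, hm2.2⟩ = z from by simpa using hget] at hz2
        exact bstOf_take_extend (by omega) hz2
    have hins := insert_into_subtree hbt (mem_bstOf.2 hxmem) (fun h => hqnot (mem_bstOf.1 h)) hlt hmid
    rwa [bstOf_take_step hk] at hins

lemma avoids231_subtree {π : List α} (hnd : π.Nodup) (hav : Avoids231 π)
    (k : ℕ) (hk : k < π.length) (j : ℕ) (hj : j < k)
    (hlt : π.get ⟨k, hk⟩ < π.get ⟨j, lt_trans hj hk⟩) :
    π.get ⟨k, hk⟩ ∈ ((bstOf π).subtreeAt (π.get ⟨j, lt_trans hj hk⟩)).keys := by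
  have := avoids231_subtree_aux hnd hav k hk j hj hlt
  have h2 := bstOf_take_extend (π := π) (k := π.length) (by omega) this
  rwa [List.take_length] at h2

/-! ### The invariant -/

def Inv (π : List α) (i : ℕ) : Prop :=
  (splaySeq (π.take i) (bstOf π)).IsBST ∧
  (∀ k, k ∈ (splaySeq (π.take i) (bstOf π)).keys ↔ k ∈ π) ∧
  (∃ rt, (splaySeq (π.take i) (bstOf π)).rootKey = some rt ∧ rt ∈ π.take i) ∧
  (∀ q ∈ (splaySeq (π.take i) (bstOf π)).keys, q ∉ π.take i →
    ∀ z ∈ ((splaySeq (π.take i) (bstOf π)).subtreeAt q).keys, z ∉ π.take i) ∧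
  (∀ q ∈ (splaySeq (π.take i) (bstOf π)).keys, q ∉ π.take i →
    (splaySeq (π.take i) (bstOf π)).subtreeAt q = (bstOf π).subtreeAt q) ∧
  (∀ q, IsSubRoot (splaySeq (π.take i) (bstOf π)) (π.take i) q →
    (splaySeq (π.take i) (bstOf π)).leftDepthKey q ≤ 1)

lemma splay_root {t : BT α} {x : α} (h : t.rootKey = some x) : BT.splay x t = t := by
  cases t with
  | leaf => simp at h
  | node l v r =>
    have : v = x := by simpa using h
    subst this
    unfold BT.splay
    rw [descend_self]
    rfl

lemma rootKey_bstOf {p : α} {π' : List α} : (bstOf (p :: π')).rootKey = some p := by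
  unfold bstOf
  rw [List.foldl_cons]
  rw [rootKey_foldl (by simp [BT.insertKey])]
  rfl

lemma get_not_mem_take {π : List α} (hnd : π.Nodup) {j : ℕ} (hj : j < π.length) :
    π.get ⟨j, hj⟩ ∉ π.take j := by
  intro hq
  obtain ⟨m, hm, hget⟩ := List.mem_take_iff_getElem.1 hq
  have hm2 := lt_min_iff.1 hm
  have : m = j := by
    refine (List.Nodup.getElem_inj_iff hnd (hi := hm2.2) (hj := hj)).1 ?_
    simpa using hget
  omega

lemma inv_base {π : List α} (hnd : π.Nodup) (hlen : 1 ≤ π.length) : Inv π 1 := by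
  obtain ⟨p, π', rfl⟩ : ∃ p π', π = p :: π' := by
    cases π with
    | nil => simp at hlen
    | cons p π' => exact ⟨p, π', rfl⟩
  have htake : (p :: π').take 1 = [p] := rfl
  have hroot : (bstOf (p :: π')).rootKey = some p := rootKey_bstOf
  have hsp : splaySeq ((p :: π').take 1) (bstOf (p :: π')) = bstOf (p :: π') := by
    rw [htake]
    show BT.splay p (bstOf (p :: π')) = _
    exact splay_root hroot
  rw [Inv, hsp, htake]
  have hbt := bst_bstOf (p :: π')
  obtain ⟨l, r, hlr⟩ : ∃ l r, bstOf (p :: π') = BT.node l p r := by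
    cases he : bstOf (p :: π') with
    | leaf => rw [he] at hroot; simp at hroot
    | node l v r =>
      rw [he] at hroot
      have : v = p := by simpa using hroot
      exact ⟨l, r, by rw [this]⟩
  refine ⟨hbt, fun k => mem_bstOf, ⟨p, hroot, by simp⟩, ?_, fun q _ _ => rfl, ?_⟩
  · -- TC
    intro q hqk hqt z hz hzt
    have hzp : z = p := by simpa using hzt
    rw [hzp] at hz
    have hqp : q ≠ p := by simpa using hqt
    rw [hlr] at hz hqk hbt
    rcases lt_trichotomy q p with hc | hc | hc
    · rw [subtreeAt_lt hc] at hz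
      exact not_mem_left hbt (keys_subtreeAt_subset hz)
    · exact hqp hc
    · rw [subtreeAt_gt hc] at hz
      exact not_mem_right hbt (keys_subtreeAt_subset hz)
  · -- sub-roots
    rintro q ⟨hqk, hqt, p', hp', hp't⟩
    have hp'p : p' = p := by simpa using hp't
    rw [hp'p] at hp'
    obtain ⟨a, b, hs, hor⟩ := parent_child hbt hp'
    rw [hlr, subtreeAt_self] at hs
    injection hs with e1 e2 e3
    subst e1; subst e3
    rw [hlr] at hbt ⊢
    rcases hor with h | h
    · have hq : q ∈ l.keys := rootKey_mem h
      rw [leftDepthKey_lt (hbt.1 _ hq)]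
      cases l with
      | leaf => simp at h
      | node a v b =>
        have : v = q := by simpa using h
        subst this
        rw [leftDepthKey_self]
    · have hq : q ∈ r.keys := rootKey_mem h
      rw [leftDepthKey_gt (hbt.2.1 _ hq)]
      cases r with
      | leaf => simp at h
      | node a v b =>
        have : v = q := by simpa using h
        subst this
        rw [leftDepthKey_self]
        omega

lemma ld_zero_of_root {A : BT α} {q : α} (h : A.rootKey = some q) :
    A.leftDepthKey q = 0 := by
  cases A with
  | leaf => simp at h
  | node a v b =>
    have : v = q := by simpa using h
    subst this
    exact leftDepthKey_self

lemma left_side_spec {t L' R' A B : BT α} {x : α}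
    (hbt : t.IsBST) (hAB : t.subtreeAt x = BT.node A x B)
    (hbt' : (BT.node L' x R').IsBST) (hExt : Ext A L') {q : α} (hq : q ∈ A.keys) :
    q < x ∧
    (BT.node L' x R').subtreeAt q = t.subtreeAt q ∧
    (A.rootKey = some q → (BT.node L' x R').leftDepthKey q = 1) ∧
    (A.rootKey ≠ some q → ∃ y', (BT.node L' x R').parentKey q = some y' ∧ y' ∈ A.keys) := by
  have hbL' : L'.IsBST := hbt'.2.2.1
  have hqL' : q ∈ L'.keys := ext_keys hExt q hq
  have hqx : q < x := hbt'.1 q hqL'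
  have hbtx : (BT.node A x B).IsBST := by rw [← hAB]; exact bst_subtreeAt hbt x
  have hbA : A.IsBST := hbtx.2.2.1
  have hqtx : q ∈ (t.subtreeAt x).keys := by rw [hAB]; exact mem_keys_node.2 (Or.inl hq)
  have hsub : t.subtreeAt q = A.subtreeAt q := by
    rw [loc_subtree hbt hqtx (ne_of_lt hqx), hAB, subtreeAt_lt hqx]
  refine ⟨hqx, ?_, ?_, ?_⟩
  · rw [subtreeAt_lt hqx, ext_subtree hExt hbL' hq, hsub]
  · intro hr
    rw [leftDepthKey_lt hqx, ext_ld hExt hbL' hq, ld_zero_of_root hr]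
  · intro hr
    obtain ⟨y', hy'⟩ := parent_exists hbA hq hr
    refine ⟨y', ?_, (pk_mem_ne hy').1⟩
    rw [parentKey_lt hqx, if_neg (ext_root_ne hExt hbL' hq hr),
      ext_parent hExt hbL' hq hr]
    exact hy'

lemma inv_step {π : List α} (hnd : π.Nodup) (hav : Avoids231 π)
    {j : ℕ} (hjl : j < π.length) (hinv : Inv π j) : Inv π (j + 1) := by
  obtain ⟨hbt, hkeys, ⟨rt, hrt, hrtt⟩, hTC, hPur, hLD⟩ := hinv
  set T0 := bstOf π with hT0
  set t := splaySeq (π.take j) T0 with htdef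
  set x := π.get ⟨j, hjl⟩ with hxdef
  have htk : π.take (j + 1) = π.take j ++ [x] := by
    have := List.take_concat_get hjl
    rw [List.concat_eq_append] at this
    rw [← this]
    rfl
  have hmem' : ∀ q, q ∈ π.take (j + 1) ↔ q ∈ π.take j ∨ q = x := by
    intro q; rw [htk]; simp
  have hts : splaySeq (π.take (j + 1)) T0 = BT.splay x t := by
    rw [htk]; unfold splaySeq; rw [List.foldl_append]; rfl
  have f1 : x ∈ t.keys := (hkeys x).2 (List.get_mem π ⟨j, hjl⟩)
  have f2 : x ∉ π.take j := get_not_mem_take hnd hjl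
  have f3 : t.rootKey ≠ some x := by
    intro h
    rw [hrt] at h
    have : rt = x := by simpa using h
    exact f2 (this ▸ hrtt)
  obtain ⟨y, hy⟩ := parent_exists hbt f1 f3
  have f5 : y ∈ π.take j := by
    by_contra hyt
    have hyk : y ∈ t.keys := (pk_mem_ne hy).1
    have hpur := hPur y hyk hyt
    obtain ⟨l, r, hs, hor⟩ := parent_child hbt hy
    have hsT0 : T0.subtreeAt y = BT.node l y r := by rw [← hpur]; exact hs
    have hpk0 : T0.parentKey x = some y := parent_child_inv (bst_bstOf π) hsT0 hor
    have hxin : x ∈ π.take (j + 1) := (hmem' x).2 (Or.inr rfl)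
    have hyin := parent_before hnd hpk0 (j + 1) hxin
    rcases (hmem' y).1 hyin with h | h
    · exact hyt h
    · exact (pk_mem_ne hy).2.2 h
  have f7 : t.leftDepthKey x ≤ 1 := hLD x ⟨f1, f2, y, hy, f5⟩
  have f8 : t.subtreeAt x = T0.subtreeAt x := hPur x f1 f2
  obtain ⟨A, B, hAB⟩ := found_of_mem hbt f1
  have f10 : ∀ z ∈ (t.subtreeAt x).keys, z ∉ π.take j := hTC x f1 f2
  have hbtx : (BT.node A x B).IsBST := by rw [← hAB]; exact bst_subtreeAt hbt x
  have f11 : ∀ q, q ∈ t.keys → q ∉ π.take (j + 1) → q < x → q ∈ A.keys := by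
    intro q hqk hqt hqx
    have hqπ : q ∈ π := (hkeys q).1 hqk
    obtain ⟨⟨k, hk⟩, hgk⟩ := List.mem_iff_get.1 hqπ
    have hkj : j < k := by
      rcases Nat.lt_trichotomy k j with h | h | h
      · exact absurd ((hmem' q).2 (Or.inl
          (List.mem_take_iff_getElem.2 ⟨k, lt_min_iff.2 ⟨h, hk⟩, by simpa using hgk⟩))) hqt
      · exact absurd ((hmem' q).2 (Or.inr (by rw [← hgk, hxdef]; congr 1; exact Fin.ext h))) hqt
      · exact h
    have h231 := avoids231_subtree hnd hav k hk j hkj (by rw [hgk]; exact hqx)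
    have h231' : q ∈ (T0.subtreeAt x).keys := by rw [← hgk]; exact h231
    rw [← f8, hAB] at h231'
    rcases mem_keys_node.1 h231' with h | h | h
    · exact h
    · exact absurd (h ▸ hqx) (lt_irrefl _)
    · exact absurd (lt_trans hqx (hbtx.2.1 q h)) (lt_irrefl _)
  rcases Nat.le_one_iff_eq_zero_or_eq_one.1 f7 with hld | hld
  · -- CASE: left depth 0
    obtain ⟨us, hd⟩ := descend_spec0 (t := t) [] hld
    rw [List.append_nil, hAB] at hd
    have heq : BT.splay x t = BT.node (lacc A us) x B := by
      rw [splay_eq_splayLoop hd]; exact splayLoop_allR x A us B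
    set L' := lacc A us with hL'def
    have hExt : Ext A L' := ext_lacc A us
    obtain ⟨hbt'0, hkeq0⟩ := splay_spec hbt x
    rw [heq] at hbt'0 hkeq0
    have hloc : ∀ q, q ∈ (BT.node L' x B).keys → q ∉ π.take (j + 1) →
        (BT.node L' x B).subtreeAt q = t.subtreeAt q ∧ q ∈ t.keys ∧
        ∀ z ∈ (t.subtreeAt q).keys, z ≠ x := by
      intro q hqk hqt
      have hqtk : q ∈ t.keys := hkeq0 ▸ hqk
      have hqx : q ≠ x := fun h => hqt ((hmem' q).2 (Or.inr h))
      rcases mem_keys_node.1 hqk with h | h | h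
      · have hqA : q ∈ A.keys := f11 q hqtk hqt (hbt'0.1 q h)
        obtain ⟨hqlt, hsub, -, -⟩ := left_side_spec hbt hAB hbt'0 hExt hqA
        refine ⟨hsub, hqtk, ?_⟩
        have hsubA : t.subtreeAt q = A.subtreeAt q := by
          rw [loc_subtree hbt (by rw [hAB]; exact mem_keys_node.2 (Or.inl hqA)) hqx, hAB,
            subtreeAt_lt hqlt]
        intro z hz
        rw [hsubA] at hz
        exact ne_of_lt (hbtx.1 z (keys_subtreeAt_subset hz))
      · exact absurd h hqx
      · have hqgt : x < q := hbt'0.2.1 q h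
        have hsubB : t.subtreeAt q = B.subtreeAt q := by
          rw [loc_subtree hbt (by rw [hAB]; exact mem_keys_node.2 (Or.inr (Or.inr h))) hqx, hAB,
            subtreeAt_gt hqgt]
        refine ⟨by rw [subtreeAt_gt hqgt, hsubB], hqtk, ?_⟩
        intro z hz
        rw [hsubB] at hz
        exact ne_of_gt (hbtx.2.1 z (keys_subtreeAt_subset hz))
    unfold Inv
    rw [hts, heq]
    refine ⟨hbt'0, fun k => by rw [hkeq0]; exact hkeys k,
      ⟨x, rfl, (hmem' x).2 (Or.inr rfl)⟩, ?_, ?_, ?_⟩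
    · intro q hqk hqt z hz hzt
      obtain ⟨hsub, hqtk, hzx⟩ := hloc q hqk hqt
      rw [hsub] at hz
      rcases (hmem' z).1 hzt with h | h
      · exact hTC q hqtk (fun hc => hqt ((hmem' q).2 (Or.inl hc))) z hz h
      · exact hzx z hz h
    · intro q hqk hqt
      obtain ⟨hsub, hqtk, -⟩ := hloc q hqk hqt
      rw [hsub]
      exact hPur q hqtk (fun hc => hqt ((hmem' q).2 (Or.inl hc)))
    · rintro q ⟨hqk, hqt, p', hp', hp't⟩
      have hqtk : q ∈ t.keys := hkeq0 ▸ hqk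
      have hqx : q ≠ x := fun h => hqt ((hmem' q).2 (Or.inr h))
      rcases mem_keys_node.1 hqk with h | h | h
      · have hqA : q ∈ A.keys := f11 q hqtk hqt (hbt'0.1 q h)
        obtain ⟨hqlt, -, hld1, hpar⟩ := left_side_spec hbt hAB hbt'0 hExt hqA
        by_cases hroot : A.rootKey = some q
        · exact le_of_eq (hld1 hroot)
        · exfalso
          obtain ⟨y', hy', hy'A⟩ := hpar hroot
          rw [hp'] at hy'
          have hpy : p' = y' := by simpa using hy'
          have hy'sub : y' ∈ (t.subtreeAt x).keys := by
            rw [hAB]; exact mem_keys_node.2 (Or.inl hy'A)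
          rcases (hmem' p').1 hp't with hh | hh
          · exact f10 y' hy'sub (hpy ▸ hh)
          · exact ne_of_lt (hbtx.1 y' hy'A) (hpy ▸ hh)
      · exact absurd h hqx
      · rw [leftDepthKey_gt (hbt'0.2.1 q h)]
        by_cases hroot : B.rootKey = some q
        · exact le_of_eq_of_le (ld_zero_of_root hroot) (Nat.zero_le 1)
        · exfalso
          obtain ⟨y', hy'⟩ := parent_exists hbtx.2.2.2 h hroot
          have hpk' : (BT.node L' x B).parentKey q = some y' := by
            rw [parentKey_gt (hbt'0.2.1 q h), if_neg hroot]; exact hy'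
          rw [hp'] at hpk'
          have hpy : p' = y' := by simpa using hpk'
          have hy'B : y' ∈ B.keys := (pk_mem_ne hy').1
          have hy'sub : y' ∈ (t.subtreeAt x).keys := by
            rw [hAB]; exact mem_keys_node.2 (Or.inr (Or.inr hy'B))
          rcases (hmem' p').1 hp't with hh | hh
          · exact f10 y' hy'sub (hpy ▸ hh)
          · exact ne_of_gt (hbtx.2.1 y' hy'B) (hpy ▸ hh)
  · -- CASE: left depth 1
    obtain ⟨ws, w, Wl, Wr, us, hd, hxw, hsw, hwl⟩ := descend_spec1 (t := t) [] hld
    rw [List.append_nil, hAB] at hd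
    obtain ⟨L', hL', hExt⟩ := splayLoop_oneL x w Wr A ws us B
    have heq : BT.splay x t = BT.node L' x (BT.node B w Wr) := by
      rw [splay_eq_splayLoop hd]; exact hL'
    obtain ⟨hbt'0, hkeq0⟩ := splay_spec hbt x
    rw [heq] at hbt'0 hkeq0
    have hbR : (BT.node B w Wr).IsBST := hbt'0.2.2.2
    have hbtw : (BT.node Wl w Wr).IsBST := by rw [← hsw]; exact bst_subtreeAt hbt w
    have hxWl : x ∈ Wl.keys := mem_of_found (hwl.trans hAB)
    have hxsw : x ∈ (t.subtreeAt w).keys := by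
      rw [hsw]; exact mem_keys_node.2 (Or.inl hxWl)
    have f_w : w ∈ π.take j := by
      by_contra hwt
      have hwk : w ∈ t.keys := mem_of_found hsw
      have hTCw := hTC w hwk hwt
      have hpkloc : t.parentKey x = (t.subtreeAt w).parentKey x :=
        loc_parent hbt hxsw (ne_of_lt hxw)
      rw [hy] at hpkloc
      have hymem : y ∈ (t.subtreeAt w).keys := (pk_mem_ne hpkloc.symm).1
      exact hTCw y hymem f5
    have hloc : ∀ q, q ∈ (BT.node L' x (BT.node B w Wr)).keys → q ∉ π.take (j + 1) →
        (BT.node L' x (BT.node B w Wr)).subtreeAt q = t.subtreeAt q ∧ q ∈ t.keys ∧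
        ∀ z ∈ (t.subtreeAt q).keys, z ≠ x := by
      intro q hqk hqt
      have hqtk : q ∈ t.keys := hkeq0 ▸ hqk
      have hqx : q ≠ x := fun h => hqt ((hmem' q).2 (Or.inr h))
      have hqw : q ≠ w := fun h => hqt ((hmem' q).2 (Or.inl (h ▸ f_w)))
      rcases mem_keys_node.1 hqk with h | h | h
      · have hqA : q ∈ A.keys := f11 q hqtk hqt (hbt'0.1 q h)
        obtain ⟨hqlt, hsub, -, -⟩ := left_side_spec hbt hAB hbt'0 hExt hqA
        refine ⟨hsub, hqtk, ?_⟩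
        have hsubA : t.subtreeAt q = A.subtreeAt q := by
          rw [loc_subtree hbt (by rw [hAB]; exact mem_keys_node.2 (Or.inl hqA)) hqx, hAB,
            subtreeAt_lt hqlt]
        intro z hz
        rw [hsubA] at hz
        exact ne_of_lt (hbtx.1 z (keys_subtreeAt_subset hz))
      · exact absurd h hqx
      · have hqgt : x < q := hbt'0.2.1 q h
        rcases mem_keys_node.1 h with hB | hW | hWr
        · -- q ∈ B
          have hqltw : q < w := hbR.1 q hB
          have hsubB : t.subtreeAt q = B.subtreeAt q := by
            rw [loc_subtree hbt (by rw [hAB]; exact mem_keys_node.2 (Or.inr (Or.inr hB))) hqx,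
              hAB, subtreeAt_gt hqgt]
          refine ⟨by rw [subtreeAt_gt hqgt, subtreeAt_lt hqltw, hsubB], hqtk, ?_⟩
          intro z hz
          rw [hsubB] at hz
          exact ne_of_gt (hbtx.2.1 z (keys_subtreeAt_subset hz))
        · exact absurd hW hqw
        · -- q ∈ Wr
          have hqgtw : w < q := hbR.2.1 q hWr
          have hqsw : q ∈ (t.subtreeAt w).keys := by
            rw [hsw]; exact mem_keys_node.2 (Or.inr (Or.inr hWr))
          have hsubW : t.subtreeAt q = Wr.subtreeAt q := by
            rw [loc_subtree hbt hqsw hqw, hsw, subtreeAt_gt hqgtw]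
          refine ⟨by rw [subtreeAt_gt hqgt, subtreeAt_gt hqgtw, hsubW], hqtk, ?_⟩
          intro z hz
          rw [hsubW] at hz
          have hzWr : z ∈ Wr.keys := keys_subtreeAt_subset hz
          exact ne_of_gt (lt_trans hxw (hbtw.2.1 z hzWr))
    unfold Inv
    rw [hts, heq]
    refine ⟨hbt'0, fun k => by rw [hkeq0]; exact hkeys k,
      ⟨x, rfl, (hmem' x).2 (Or.inr rfl)⟩, ?_, ?_, ?_⟩
    · intro q hqk hqt z hz hzt
      obtain ⟨hsub, hqtk, hzx⟩ := hloc q hqk hqt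
      rw [hsub] at hz
      rcases (hmem' z).1 hzt with h | h
      · exact hTC q hqtk (fun hc => hqt ((hmem' q).2 (Or.inl hc))) z hz h
      · exact hzx z hz h
    · intro q hqk hqt
      obtain ⟨hsub, hqtk, -⟩ := hloc q hqk hqt
      rw [hsub]
      exact hPur q hqtk (fun hc => hqt ((hmem' q).2 (Or.inl hc)))
    · rintro q ⟨hqk, hqt, p', hp', hp't⟩
      have hqtk : q ∈ t.keys := hkeq0 ▸ hqk
      have hqx : q ≠ x := fun h => hqt ((hmem' q).2 (Or.inr h))
      have hqw : q ≠ w := fun h => hqt ((hmem' q).2 (Or.inl (h ▸ f_w)))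
      rcases mem_keys_node.1 hqk with h | h | h
      · have hqA : q ∈ A.keys := f11 q hqtk hqt (hbt'0.1 q h)
        obtain ⟨hqlt, -, hld1, hpar⟩ := left_side_spec hbt hAB hbt'0 hExt hqA
        by_cases hroot : A.rootKey = some q
        · exact le_of_eq (hld1 hroot)
        · exfalso
          obtain ⟨y', hy', hy'A⟩ := hpar hroot
          rw [hp'] at hy'
          have hpy : p' = y' := by simpa using hy'
          have hy'sub : y' ∈ (t.subtreeAt x).keys := by
            rw [hAB]; exact mem_keys_node.2 (Or.inl hy'A)
          rcases (hmem' p').1 hp't with hh | hh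
          · exact f10 y' hy'sub (hpy ▸ hh)
          · exact ne_of_lt (hbtx.1 y' hy'A) (hpy ▸ hh)
      · exact absurd h hqx
      · have hqgt : x < q := hbt'0.2.1 q h
        rw [leftDepthKey_gt hqgt]
        rcases mem_keys_node.1 h with hB | hW | hWr
        · -- q ∈ B
          have hqltw : q < w := hbR.1 q hB
          rw [leftDepthKey_lt hqltw]
          by_cases hroot : B.rootKey = some q
          · rw [ld_zero_of_root hroot]
          · exfalso
            obtain ⟨y', hy'⟩ := parent_exists hbtx.2.2.2 hB hroot
            have hpk' : (BT.node L' x (BT.node B w Wr)).parentKey q = some y' := by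
              rw [parentKey_gt hqgt]
              have hrne : (BT.node B w Wr).rootKey ≠ some q := by
                intro hc
                have hwq : w = q := by simpa using hc
                exact hqw hwq.symm
              rw [if_neg hrne, parentKey_lt hqltw, if_neg hroot]
              exact hy'
            rw [hp'] at hpk'
            have hpy : p' = y' := by simpa using hpk'
            have hy'B : y' ∈ B.keys := (pk_mem_ne hy').1
            have hy'sub : y' ∈ (t.subtreeAt x).keys := by
              rw [hAB]; exact mem_keys_node.2 (Or.inr (Or.inr hy'B))
            rcases (hmem' p').1 hp't with hh | hh
            · exact f10 y' hy'sub (hpy ▸ hh)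
            · exact ne_of_gt (hbtx.2.1 y' hy'B) (hpy ▸ hh)
        · exact absurd hW hqw
        · -- q ∈ Wr
          have hqgtw : w < q := hbR.2.1 q hWr
          rw [leftDepthKey_gt hqgtw]
          by_cases hroot : Wr.rootKey = some q
          · exact le_of_eq_of_le (ld_zero_of_root hroot) (Nat.zero_le 1)
          · -- q was a sub-root in t with the same parent
            have hqsw : q ∈ (t.subtreeAt w).keys := by
              rw [hsw]; exact mem_keys_node.2 (Or.inr (Or.inr hWr))
            obtain ⟨y', hy'⟩ := parent_exists hbtw.2.2.2 hWr hroot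
            have hpk' : (BT.node L' x (BT.node B w Wr)).parentKey q = some y' := by
              rw [parentKey_gt hqgt]
              have hrne : (BT.node B w Wr).rootKey ≠ some q := by
                intro hc
                have hwq : w = q := by simpa using hc
                exact hqw hwq.symm
              rw [if_neg hrne, parentKey_gt hqgtw, if_neg hroot]
              exact hy'
            have hpkt : t.parentKey q = some y' := by
              rw [loc_parent hbt hqsw hqw, hsw, parentKey_gt hqgtw, if_neg hroot]
              exact hy'
            rw [hp'] at hpk'
            have hpy : p' = y' := by simpa using hpk'
            have hy'Wr : y' ∈ Wr.keys := (pk_mem_ne hy').1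
            have hp'tj : p' ∈ π.take j := by
              rcases (hmem' p').1 hp't with hh | hh
              · exact hh
              · exfalso
                have hlt2 : x < y' := lt_trans hxw (hbtw.2.1 y' hy'Wr)
                exact absurd (hh.symm.trans hpy) (ne_of_lt hlt2)
            have hsr : IsSubRoot t (π.take j) q :=
              ⟨hqtk, fun hc => hqt ((hmem' q).2 (Or.inl hc)), p', hpy.symm ▸ hpkt, hp'tj⟩
            have hold := hLD q hsr
            have hle : (t.subtreeAt w).leftDepthKey q ≤ t.leftDepthKey q := loc_ld hbt hqsw
            rw [hsw, leftDepthKey_gt hqgtw] at hle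
            omega

lemma inv_all {π : List α} (hnd : π.Nodup) (hav : Avoids231 π) :
    ∀ i, 1 ≤ i → i ≤ π.length → Inv π i := by
  intro i
  induction i with
  | zero => intro h1 h2; omega
  | succ n ih =>
    intro h1 h2
    rcases Nat.lt_or_ge 0 n with h | h
    · exact inv_step hnd hav (by omega) (ih (by omega) (by omega))
    · have : n = 0 := by omega
      subst this
      exact inv_base hnd (by omega)

end BTAux

/-- While insertion splaying a (2,3,1)-avoiding sequence of distinct keys
(equivalently, splaying the keys in order starting from the insertion tree
`bstOf π`), after each splay every sub-root (untouched node with a touched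
parent) has left-depth at most 1. -/
theorem subroot_leftdepth_le_one_avoids231 {α : Type} [LinearOrder α]
    (π : List α) (hnd : π.Nodup) (hav : Avoids231 π)
    (i : ℕ) (h1 : 1 ≤ i) (h2 : i ≤ π.length) :
    ∀ q, IsSubRoot (splaySeq (π.take i) (bstOf π)) (π.take i) q →
      (splaySeq (π.take i) (bstOf π)).leftDepthKey q ≤ 1 := by
  exact (BTAux.inv_all hnd hav i h1 h2).2.2.2.2.2
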